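/- Let R be a commutative ring and M an R-module with Z(M) ⊆ Z(R). If the trivial extension R ⋉ M is a Prüfer ring, then R is a Prüfer ring and M_m = r·M_m for every maximal ideal m of R and every regular element r of R. -/

import Mathlib

open Pointwise

/-- The set of zero-divisors of a commutative ring `A`. -/
def zdivSet (A : Type*) [CommRing A] : Set A := {a | ∃ b, b ≠ 0 ∧ a * b = 0}

/-- `Z(M)`: the set of elements of `R` that kill some nonzero element of `M`. -/
def zdivModSet (R M : Type*) [CommRing R] [AddCommGroup M] [Module R M] : Set R :=
  {r | ∃ m : M, m ≠ 0 ∧ r • m = 0}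

/-- A commutative ring is a Prüfer ring if every nonzero finitely generated regular ideal
is projective (equivalently, invertible). -/
def IsPruferRing (A : Type*) [CommRing A] : Prop :=
  ∀ I : Ideal A, I ≠ ⊥ → I.FG → (∃ r ∈ I, r ∈ nonZeroDivisors A) → Module.Projective A I

section Aux

open TrivSqZeroExt

variable {R M : Type*} [CommRing R] [AddCommGroup M] [Module R M]
    [Module Rᵐᵒᵖ M] [IsCentralScalar R M]

/-- If `r` is regular in `R` and `Z(M) ⊆ Z(R)`, then `inl r` is regular in `R ⋉ M`. -/
lemma aux_inl_regular (hZM : zdivModSet R M ⊆ zdivSet R) {r : R}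
    (hr : r ∈ nonZeroDivisors R) :
    (inl r : TrivSqZeroExt R M) ∈ nonZeroDivisors (TrivSqZeroExt R M) := by
  rw [mem_nonZeroDivisors_iff_right] at hr ⊢
  intro z hz
  have h1 : z.fst * r = 0 := by
    have := congrArg fst hz
    simpa using this
  have hz1 : z.fst = 0 := hr _ h1
  have h2 : r • z.snd = 0 := by
    have := congrArg snd hz
    simpa [snd_mul, op_smul_eq_smul] using this
  have hz2 : z.snd = 0 := by
    by_contra hne
    obtain ⟨b, hb, hrb⟩ := hZM ⟨z.snd, hne, h2⟩
    exact hb (hr b (by rw [mul_comm]; exact hrb))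
  exact TrivSqZeroExt.ext hz1 hz2

lemma aux_r_ne_zero [Nontrivial R] {r : R} (hr : r ∈ nonZeroDivisors R) : r ≠ 0 := by
  rintro rfl
  exact one_ne_zero (mem_nonZeroDivisors_iff_right.mp hr 1 (by simp))

/-- The key global statement for part 2: every element of `M` is divisible by every
regular element of `R`. -/
lemma aux_div (hZM : zdivModSet R M ⊆ zdivSet R)
    (hP : IsPruferRing (TrivSqZeroExt R M)) {r : R} (hr : r ∈ nonZeroDivisors R)
    (x : M) : ∃ p : M, x = r • p := by
  rcases subsingleton_or_nontrivial R with hss | hnt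
  · haveI := Module.subsingleton R M
    exact ⟨0, Subsingleton.elim _ _⟩
  set J : Ideal (TrivSqZeroExt R M) := Ideal.span {inl r, inr x} with hJdef
  have hrmem : (inl r : TrivSqZeroExt R M) ∈ J := Ideal.subset_span (Set.mem_insert _ _)
  have hxmem : (inr x : TrivSqZeroExt R M) ∈ J := Ideal.subset_span (Set.mem_insert_of_mem _ rfl)
  have hrne : r ≠ 0 := aux_r_ne_zero hr
  have hJne : J ≠ ⊥ := by
    intro h
    rw [h, Ideal.mem_bot] at hrmem
    exact hrne (by simpa using congrArg fst hrmem)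
  have hreg : (inl r : TrivSqZeroExt R M) ∈ nonZeroDivisors (TrivSqZeroExt R M) := aux_inl_regular hZM hr
  have hproj : Module.Projective (TrivSqZeroExt R M) J := hP J hJne (Submodule.fg_span (Set.toFinite _))
    ⟨_, hrmem, hreg⟩
  -- surjection A × A → J
  let φ0 : TrivSqZeroExt R M × TrivSqZeroExt R M →ₗ[TrivSqZeroExt R M] TrivSqZeroExt R M :=
    (LinearMap.toSpanSingleton (TrivSqZeroExt R M) (TrivSqZeroExt R M) (inl r)).comp (LinearMap.fst (TrivSqZeroExt R M) (TrivSqZeroExt R M) (TrivSqZeroExt R M)) +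
      (LinearMap.toSpanSingleton (TrivSqZeroExt R M) (TrivSqZeroExt R M) (inr x)).comp (LinearMap.snd (TrivSqZeroExt R M) (TrivSqZeroExt R M) (TrivSqZeroExt R M))
  have hφ0 : ∀ z : TrivSqZeroExt R M × TrivSqZeroExt R M, φ0 z = z.1 * inl r + z.2 * inr x := by
    intro z
    simp [φ0, LinearMap.toSpanSingleton_apply, smul_eq_mul]
  have hmem2 : ∀ z : TrivSqZeroExt R M × TrivSqZeroExt R M, φ0 z ∈ J := by
    intro z
    rw [hφ0]
    exact add_mem (Ideal.mul_mem_left _ _ hrmem) (Ideal.mul_mem_left _ _ hxmem)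
  let φ : TrivSqZeroExt R M × TrivSqZeroExt R M →ₗ[TrivSqZeroExt R M] J := LinearMap.codRestrict (J : Submodule (TrivSqZeroExt R M) (TrivSqZeroExt R M)) φ0 hmem2
  have hφsurj : Function.Surjective φ := by
    rintro ⟨y, hy⟩
    rw [hJdef, Ideal.mem_span_pair] at hy
    obtain ⟨a, b, hab⟩ := hy
    exact ⟨(a, b), Subtype.ext (by rw [LinearMap.codRestrict_apply, hφ0]; exact hab)⟩
  haveI := hproj
  obtain ⟨σ, hσ⟩ := Module.projective_lifting_property φ LinearMap.id hφsurj
  set jr : J := ⟨inl r, hrmem⟩ with hjr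
  set jx : J := ⟨inr x, hxmem⟩ with hjx
  have hσjr : (σ jr).1 * inl r + (σ jr).2 * inr x = inl r := by
    have := congrArg Subtype.val (LinearMap.congr_fun hσ jr)
    rw [LinearMap.comp_apply, LinearMap.id_apply] at this
    simpa [φ, LinearMap.codRestrict_apply, hφ0] using this
  -- the commutation relation
  have hcomm : (inr x : TrivSqZeroExt R M) • jr = (inl r : TrivSqZeroExt R M) • jx := by
    apply Subtype.ext
    show (inr x : TrivSqZeroExt R M) • (inl r : TrivSqZeroExt R M) = (inl r : TrivSqZeroExt R M) • (inr x : TrivSqZeroExt R M)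
    rw [smul_eq_mul, smul_eq_mul, mul_comm]
  have hσcomm : (inr x : TrivSqZeroExt R M) • σ jr = (inl r : TrivSqZeroExt R M) • σ jx := by
    rw [← map_smul, ← map_smul, hcomm]
  have hfirst : (inr x : TrivSqZeroExt R M) * (σ jr).1 = (inl r : TrivSqZeroExt R M) * (σ jx).1 := by
    have := congrArg Prod.fst hσcomm
    simpa [smul_eq_mul] using this
  -- fst of hσjr : (σ jr).1.fst * r = r
  have hc : (σ jr).1.fst * r = r := by
    have := congrArg fst hσjr
    simpa using this
  have hc1 : (σ jr).1.fst = 1 := by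
    have h0 : ((σ jr).1.fst - 1) * r = 0 := by rw [sub_mul, one_mul, hc, sub_self]
    have := mem_nonZeroDivisors_iff_right.mp hr _ h0
    rwa [sub_eq_zero] at this
  refine ⟨(σ jx).1.snd, ?_⟩
  have := congrArg snd hfirst
  simpa [snd_mul, op_smul_eq_smul, hc1] using this

/-- If `R ⋉ M` is Prüfer and `Z(M) ⊆ Z(R)` then `R` is Prüfer. -/
lemma aux_prufer (hZM : zdivModSet R M ⊆ zdivSet R)
    (hP : IsPruferRing (TrivSqZeroExt R M)) : IsPruferRing R := by
  intro I hne hfg hrex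
  obtain ⟨r, hrI, hr⟩ := hrex
  rcases subsingleton_or_nontrivial R with hss | hnt
  · refine absurd ?_ hne
    ext y
    simp [Subsingleton.elim y (0 : R)]
  classical
  set J : Ideal (TrivSqZeroExt R M) := I.map (algebraMap R (TrivSqZeroExt R M)) with hJdef
  have hmem : ∀ a ∈ I, (inl a : TrivSqZeroExt R M) ∈ J := fun a ha => by
    have h1 := Ideal.mem_map_of_mem (algebraMap R (TrivSqZeroExt R M)) ha
    rwa [show (algebraMap R (TrivSqZeroExt R M)) a = inl a from
      congrFun (algebraMap_eq_inl (R' := R) (M := M)) a] at h1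
  have hrne : r ≠ 0 := aux_r_ne_zero hr
  have hJne : J ≠ ⊥ := fun h => by
    have h2 := hmem r hrI
    rw [h, Ideal.mem_bot] at h2
    exact hrne (by simpa using congrArg fst h2)
  have hreg : (inl r : TrivSqZeroExt R M) ∈ nonZeroDivisors (TrivSqZeroExt R M) :=
    aux_inl_regular hZM hr
  have hproj : Module.Projective (TrivSqZeroExt R M) J :=
    hP J hJne (Ideal.FG.map hfg _) ⟨_, hmem r hrI, hreg⟩
  obtain ⟨s, hs⟩ := hfg
  let ι := ↥(↑s : Set R)
  let g' : ι → TrivSqZeroExt R M := fun i => inl (i : R)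
  let T : (ι →₀ TrivSqZeroExt R M) →ₗ[TrivSqZeroExt R M] TrivSqZeroExt R M :=
    Finsupp.linearCombination _ g'
  have hle : Submodule.span (TrivSqZeroExt R M) (Set.range g') ≤ J := by
    rw [Submodule.span_le]
    rintro _ ⟨i, rfl⟩
    exact hmem _ (hs ▸ Ideal.subset_span i.2)
  have hrangeT : ∀ f, T f ∈ J := fun f => by
    have h1 : T f ∈ LinearMap.range T := ⟨f, rfl⟩
    rw [show T = Finsupp.linearCombination _ g' from rfl, Finsupp.range_linearCombination] at h1
    exact hle h1
  let p' : (ι →₀ TrivSqZeroExt R M) →ₗ[TrivSqZeroExt R M] J :=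
    LinearMap.codRestrict (J : Submodule (TrivSqZeroExt R M) (TrivSqZeroExt R M)) T hrangeT
  have hJeq : (J : Submodule (TrivSqZeroExt R M) (TrivSqZeroExt R M)) =
      Submodule.span (TrivSqZeroExt R M) (Set.range g') := by
    rw [hJdef, ← hs, Ideal.map_span, algebraMap_eq_inl, Set.image_eq_range]
  have hp'surj : Function.Surjective p' := by
    rintro ⟨y, hy⟩
    rw [hJeq, ← Finsupp.range_linearCombination] at hy
    obtain ⟨f, hf⟩ := hy
    exact ⟨f, Subtype.ext hf⟩
  haveI := hproj
  obtain ⟨sec', hsec'⟩ := Module.projective_lifting_property p' LinearMap.id hp'surj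
  let pI0 : (ι →₀ R) →ₗ[R] R := Finsupp.linearCombination R (fun i : ι => (i : R))
  have hmemI : ∀ f, pI0 f ∈ I := fun f => by
    have h1 : pI0 f ∈ LinearMap.range pI0 := ⟨f, rfl⟩
    rw [show pI0 = Finsupp.linearCombination R (fun i : ι => (i : R)) from rfl,
      Finsupp.range_linearCombination] at h1
    have h2 : Submodule.span R (Set.range fun i : ι => (i : R)) ≤ I := by
      rw [Subtype.range_coe]
      exact hs.le
    exact h2 h1
  let pI : (ι →₀ R) →ₗ[R] I := LinearMap.codRestrict (I : Submodule R R) pI0 hmemI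
  let secfun : I → (ι →₀ R) := fun a =>
    Finsupp.mapRange fst fst_zero (sec' ⟨inl (a : R), hmem _ a.2⟩)
  have hsec_add : ∀ a b : I, secfun (a + b) = secfun a + secfun b := by
    intro a b
    have h1 : (⟨inl ((a + b : I) : R), hmem _ (a + b).2⟩ : J) =
        ⟨inl (a : R), hmem _ a.2⟩ + ⟨inl (b : R), hmem _ b.2⟩ :=
      Subtype.ext (by push_cast [inl_add]; rfl)
    show Finsupp.mapRange fst fst_zero (sec' _) = _
    rw [h1, map_add, Finsupp.mapRange_add fst_add]
  have hsec_smul : ∀ (c : R) (a : I), secfun (c • a) = c • secfun a := by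
    intro c a
    have h1 : (⟨inl ((c • a : I) : R), hmem _ (c • a).2⟩ : J) =
        (inl c : TrivSqZeroExt R M) • ⟨inl (a : R), hmem _ a.2⟩ := by
      apply Subtype.ext
      show (inl ((c • a : I) : R) : TrivSqZeroExt R M) = inl c • inl (a : R)
      rw [smul_eq_mul, inl_mul_inl]
      norm_cast
    show Finsupp.mapRange fst fst_zero (sec' _) = _
    rw [h1, map_smul]
    ext i
    simp [secfun, Finsupp.mapRange_apply, Finsupp.smul_apply, smul_eq_mul]
  let sec : I →ₗ[R] (ι →₀ R) :=
    { toFun := secfun, map_add' := hsec_add, map_smul' := hsec_smul }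
  have hkey : ∀ f : ι →₀ TrivSqZeroExt R M,
      pI0 (Finsupp.mapRange fst fst_zero f) = (T f).fst := by
    intro f
    induction f using Finsupp.induction_linear with
    | zero => simp
    | add f g hf hg =>
      rw [Finsupp.mapRange_add fst_add, map_add, hf, hg, map_add, fst_add]
    | single i c =>
      rw [Finsupp.mapRange_single]
      show Finsupp.linearCombination R (fun i : ι => (i : R)) _ =
        (Finsupp.linearCombination _ g' _).fst
      rw [Finsupp.linearCombination_single, Finsupp.linearCombination_single]
      show c.fst • (i : R) = (c • inl (i : R)).fst
      rw [smul_eq_mul, smul_eq_mul, fst_mul, fst_inl]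
  have H : pI.comp sec = LinearMap.id := by
    apply LinearMap.ext
    intro a
    apply Subtype.ext
    have h2 : T (sec' ⟨inl (a : R), hmem _ a.2⟩) = inl (a : R) := by
      have h3 := congrArg Subtype.val (LinearMap.congr_fun hsec' ⟨inl (a : R), hmem _ a.2⟩)
      exact h3
    show pI0 (secfun a) = (a : R)
    rw [show secfun a = Finsupp.mapRange fst fst_zero (sec' ⟨inl (a : R), hmem _ a.2⟩) from rfl,
      hkey, h2, fst_inl]
  exact Module.Projective.of_split sec pI H

end Aux

theorem stmt11 {R M : Type*} [CommRing R] [AddCommGroup M] [Module R M]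
    [Module Rᵐᵒᵖ M] [IsCentralScalar R M]
    (hZM : zdivModSet R M ⊆ zdivSet R)
    (hP : IsPruferRing (TrivSqZeroExt R M)) :
    IsPruferRing R ∧
      ∀ (m : Ideal R) [m.IsMaximal], ∀ r ∈ nonZeroDivisors R,
        r • (⊤ : Submodule R (LocalizedModule m.primeCompl M)) = ⊤ := by
  refine ⟨aux_prufer hZM hP, ?_⟩
  intro m _ r hr
  rw [eq_top_iff]
  rintro y -
  induction y using LocalizedModule.induction_on with
  | h x s =>
    obtain ⟨p, hp⟩ := aux_div hZM hP hr x
    rw [hp, ← LocalizedModule.smul'_mk]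
    exact Submodule.smul_mem_pointwise_smul _ r ⊤ trivial
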